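/- Let R be a ring in which 2 is invertible. An element a ∈ R has a Hirano inverse if and only if a = b - c for some commuting elements b, c ∈ R that both have strongly Drazin inverses. -/

import Mathlib

def IsHiranoInverse {R : Type*} [Ring R] (a b : R) : Prop :=
  IsNilpotent (a ^ 2 - a * b) ∧ a * b = b * a ∧ b = b * a * b

def IsStronglyDrazinInverse {R : Type*} [Ring R] (a x : R) : Prop :=
  IsNilpotent (a - a * x) ∧ a * x = x * a ∧ x = x * a * x

theorem sd_comm {S : Type*} [CommRing S] (s : S) (h : IsNilpotent (s - s ^ 2)) :
    ∃ x : S, IsNilpotent (s - s * x) ∧ x = x * s * x := by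
  obtain ⟨n₀, hn₀⟩ := h
  set n := n₀ + 1 with hndef
  have hx : (s - s ^ 2) ^ n = 0 := by rw [hndef, pow_succ, hn₀, zero_mul]
  have hs : s ^ n * (1 - s) ^ n = 0 := by
    rw [← mul_pow]; rw [show s * (1 - s) = s - s ^ 2 by ring]; exact hx
  set e : S := 1 - (1 - s ^ n) ^ n with hedef
  have hidem : IsIdempotentElem e := isIdempotentElem_one_sub_one_sub_pow_pow s n hx
  -- e = (geom sum) * s^n
  have hw : e = (∑ i ∈ Finset.range n, (1 - s ^ n) ^ i) * s ^ n := by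
    have hg := geom_sum_mul (1 - s ^ n) n
    rw [hedef]; linear_combination hg
  have F1 : e * (1 - s) ^ n = 0 := by
    rw [hw, mul_assoc, hs, mul_zero]
  have hw2 : (1 : S) - e = ((∑ i ∈ Finset.range n, s ^ i) * (1 - s)) ^ n := by
    have hg := geom_sum_mul s n
    rw [hedef, sub_sub_cancel, show (1:S) - s ^ n = (∑ i ∈ Finset.range n, s ^ i) * (1 - s) by linear_combination hg]
  have F2 : (1 - e) * s ^ n = 0 := by
    rw [hw2, mul_pow, mul_assoc, mul_comm ((1-s)^n), hs, mul_zero]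
  have nil1 : IsNilpotent (e * (1 - s)) := by
    refine ⟨n, ?_⟩
    rw [mul_pow, hndef, hidem.pow_succ_eq, F1]
  have hu : IsUnit (1 - e * (1 - s)) := nil1.isUnit_one_sub
  set v : S := ↑hu.unit⁻¹ with hvdef
  have huv : (1 - e * (1 - s)) * v = 1 := by
    rw [hvdef]; nth_rewrite 1 [← hu.unit_spec]; exact hu.unit.mul_inv
  refine ⟨e * v, ?_, ?_⟩
  · have sx : s * (e * v) = e := by
      have key : s * (e * v) = (e * (1 - e * (1-s))) * v := by
        linear_combination v * (1 - s) * hidem.eq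
      rw [key, show e * (1 - e*(1-s)) * v = e * ((1 - e*(1-s)) * v) by ring, huv, mul_one]
    rw [sx]
    have nila : IsNilpotent (s * (1 - e)) := by
      refine ⟨n, ?_⟩
      rw [mul_pow, hndef, hidem.one_sub.pow_succ_eq, mul_comm, ← hndef, F2]
    have nilb : IsNilpotent ((1 - s) * e) := by
      refine ⟨n, ?_⟩
      rw [mul_pow, hndef, hidem.pow_succ_eq, mul_comm, ← hndef, F1]
    have : s - e = s * (1 - e) - (1 - s) * e := by ring
    rw [this]
    exact (Commute.all _ _).isNilpotent_sub nila nilb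
  · have sx : s * (e * v) = e := by
      have key : s * (e * v) = (e * (1 - e * (1-s))) * v := by
        linear_combination v * (1 - s) * hidem.eq
      rw [key, show e * (1 - e*(1-s)) * v = e * ((1 - e*(1-s)) * v) by ring, huv, mul_one]
    linear_combination (-(e*v)) * sx - v * hidem.eq

theorem nil_up {R : Type*} [Ring R] {S : Subring R} {x : S} (h : IsNilpotent (x : R)) :
    IsNilpotent x := by
  obtain ⟨n, hn⟩ := h
  exact ⟨n, Subtype.ext (by push_cast; exact hn)⟩

theorem nil_down {R : Type*} [Ring R] {S : Subring R} {x : S} (h : IsNilpotent x) :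
    IsNilpotent (x : R) := by
  obtain ⟨n, hn⟩ := h
  exact ⟨n, by exact_mod_cast congrArg Subtype.val hn⟩

theorem pair_comm {R : Type*} [Ring R] {p q : R} (h : p * q = q * p) :
    ∀ x ∈ ({p, q} : Set R), ∀ y ∈ ({p, q} : Set R), x * y = y * x := by
  rintro x (rfl|rfl) y (rfl|rfl) <;> simp_all

-- Lemma B

theorem sd_exists {R : Type*} [Ring R] {s : R} (h : IsNilpotent (s - s ^ 2)) :
    ∃ x : R, IsStronglyDrazinInverse s x ∧ ∀ z : R, Commute z s → Commute z x := by
  set S : Subring R := Subring.closure {s} with hS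
  letI : CommRing S := Subring.closureCommRingOfComm (by rintro x rfl y rfl; rfl)
  set sS : S := ⟨s, Subring.subset_closure rfl⟩ with hsS
  have hnil : IsNilpotent (sS - sS ^ 2) := nil_up (by push_cast; exact h)
  obtain ⟨x, hx1, hx2⟩ := sd_comm sS hnil
  refine ⟨(x : R), ⟨?_, ?_, ?_⟩, ?_⟩
  · have := nil_down hx1
    push_cast at this
    exact this
  · have hcx : Commute s (x : R) := by
      have hm : (x : R) ∈ Subring.centralizer {s} := by
        have hle : S ≤ Subring.centralizer {s} := by
          rw [hS]
          exact Subring.closure_le.mpr (by rintro y rfl; exact Subring.mem_centralizer_iff.mpr (by rintro g rfl; rfl))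
        exact hle x.2
      exact (Subring.mem_centralizer_iff.mp hm s rfl)
    exact hcx.eq
  · have := congrArg (Subtype.val) hx2
    push_cast at this
    exact this
  · intro z hz
    have hm : (x : R) ∈ Subring.centralizer {z} := by
      have hle : S ≤ Subring.centralizer {z} := by
        rw [hS]
        exact Subring.closure_le.mpr (by rintro y rfl; exact Subring.mem_centralizer_iff.mpr (by rintro g rfl; exact hz.eq))
      exact hle x.2
    exact (Subring.mem_centralizer_iff.mp hm z rfl)

theorem lemB {R : Type*} [Ring R] {s x : R} (h : IsStronglyDrazinInverse s x) :
    IsNilpotent (s - s ^ 2) := by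
  obtain ⟨hn, hc, hy⟩ := h
  set S : Subring R := Subring.closure {s, x} with hS
  letI : CommRing S := Subring.closureCommRingOfComm (pair_comm hc)
  set sS : S := ⟨s, Subring.subset_closure (by simp)⟩ with hsS
  set xS : S := ⟨x, Subring.subset_closure (by simp)⟩ with hxS
  have hnS : IsNilpotent (sS - sS * xS) := nil_up (by push_cast; exact hn)
  have hyS : xS = xS * sS * xS := Subtype.ext (by push_cast; exact hy)
  have key : sS - sS ^ 2 = (sS - sS * xS) * (1 - sS - sS * xS) := by
    linear_combination sS * hyS
  have : IsNilpotent (sS - sS ^ 2) := by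
    rw [key]; exact (Commute.all _ _).isNilpotent_mul_right hnS
  have := nil_down this
  push_cast at this
  exact this

-- Lemma C

theorem lemC {R : Type*} [Ring R] {a x : R} (h : IsHiranoInverse a x) :
    IsNilpotent (a - a ^ 3) := by
  obtain ⟨hn, hc, hy⟩ := h
  set S : Subring R := Subring.closure {a, x} with hS
  letI : CommRing S := Subring.closureCommRingOfComm (pair_comm hc)
  set A : S := ⟨a, Subring.subset_closure (by simp)⟩ with hA
  set X : S := ⟨x, Subring.subset_closure (by simp)⟩ with hX
  have hnS : IsNilpotent (A ^ 2 - A * X) := nil_up (by push_cast; exact hn)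
  have hyS : X = X * A * X := Subtype.ext (by push_cast; exact hy)
  have sq : (A * (1 - A * X)) ^ 2 = (A ^ 2 - A * X) * (1 - A * X) := by
    linear_combination (A - A ^ 3) * hyS
  have nil1 : IsNilpotent (A * (1 - A * X)) := by
    obtain ⟨k, hk⟩ : IsNilpotent ((A * (1 - A * X)) ^ 2) := by
      rw [sq]; exact (Commute.all _ _).isNilpotent_mul_right hnS
    exact ⟨2 * k, by rw [pow_mul]; exact hk⟩
  have key : A - A ^ 3 = A * (1 - A * X) - A * (A ^ 2 - A * X) := by ring
  have : IsNilpotent (A - A ^ 3) := by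
    rw [key]
    exact (Commute.all _ _).isNilpotent_sub nil1 ((Commute.all _ _).isNilpotent_mul_left hnS)
  have := nil_down this
  push_cast at this
  exact this

theorem lemD {R : Type*} [Ring R] {a : R} (h : IsNilpotent (a - a ^ 3)) :
    ∃ x, IsHiranoInverse a x := by
  have h2 : IsNilpotent (a ^ 2 - (a ^ 2) ^ 2) := by
    have heq : a ^ 2 - (a ^ 2) ^ 2 = a * (a - a ^ 3) := by noncomm_ring
    rw [heq]
    exact ((Commute.refl a).sub_right ((Commute.refl a).pow_right 3)).isNilpotent_mul_left h
  obtain ⟨y, ⟨hnil, hcm, hy⟩, hcom⟩ := sd_exists h2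
  have cay : Commute a y := hcom a ((Commute.refl a).pow_right 2)
  refine ⟨a * y, ?_, ?_, ?_⟩
  · have : a * (a * y) = a ^ 2 * y := by rw [← mul_assoc, ← pow_two]
    rw [this]
    exact hnil
  · rw [mul_assoc, cay.eq]
  · have h1 : a * y * a * (a * y) = a * (y * a ^ 2 * y) := by
      rw [pow_two]; noncomm_ring
    rw [h1, ← hy]

theorem stmt9 {R : Type*} [Ring R] (h2 : IsUnit (2 : R)) (a : R) :
    (∃ x, IsHiranoInverse a x) ↔
    (∃ b c : R, b * c = c * b ∧ a = b - c ∧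
      (∃ x, IsStronglyDrazinInverse b x) ∧ (∃ y, IsStronglyDrazinInverse c y)) := by
  constructor
  · rintro ⟨x, hx⟩
    have hn3 : IsNilpotent (a - a ^ 3) := lemC hx
    set t : R := ↑h2.unit⁻¹ with htdef
    have h2t : 2 * t = 1 := by
      rw [htdef]; nth_rewrite 1 [← h2.unit_spec]; exact h2.unit.mul_inv
    have cat : a * t = t * a := by
      have c2 : Commute a (h2.unit : R) := by
        rw [h2.unit_spec]; show a * 2 = 2 * a; rw [mul_two, two_mul]
      exact (c2.units_inv_right).eq
    set S : Subring R := Subring.closure {a, t} with hS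
    letI : CommRing S := Subring.closureCommRingOfComm (pair_comm cat)
    set A : S := ⟨a, Subring.subset_closure (by simp)⟩ with hA
    set T : S := ⟨t, Subring.subset_closure (by simp)⟩ with hT
    have hTS : (2 : S) * T = 1 := Subtype.ext (by push_cast; exact h2t)
    have hn3S : IsNilpotent (A - A ^ 3) := nil_up (by push_cast; exact hn3)
    set B : S := T * (A ^ 2 + A) with hB
    set C : S := T * (A ^ 2 - A) with hC
    have hBC : (B : R) * (C : R) = (C : R) * (B : R) := by
      exact_mod_cast congrArg Subtype.val (mul_comm B C)
    have habc : a = (B : R) - (C : R) := by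
      have h' : A = B - C := by rw [hB, hC]; linear_combination (-A) * hTS
      have := congrArg Subtype.val h'
      push_cast at this; exact this
    have hBnil : IsNilpotent (B - B ^ 2) := by
      have key : B - B ^ 2 = T ^ 2 * ((A - A ^ 3) * (A + 2)) := by
        rw [hB]; linear_combination (-(T * (A ^ 2 + A))) * hTS
      rw [key]
      exact (Commute.all _ _).isNilpotent_mul_left
        ((Commute.all _ _).isNilpotent_mul_right hn3S)
    have hCnil : IsNilpotent (C - C ^ 2) := by
      have key : C - C ^ 2 = T ^ 2 * ((A - A ^ 3) * (A - 2)) := by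
        rw [hC]; linear_combination (-(T * (A ^ 2 - A))) * hTS
      rw [key]
      exact (Commute.all _ _).isNilpotent_mul_left
        ((Commute.all _ _).isNilpotent_mul_right hn3S)
    have hBnil' : IsNilpotent ((B : R) - (B : R) ^ 2) := by
      have := nil_down hBnil; push_cast at this; exact this
    have hCnil' : IsNilpotent ((C : R) - (C : R) ^ 2) := by
      have := nil_down hCnil; push_cast at this; exact this
    obtain ⟨xb, hxb, -⟩ := sd_exists hBnil'
    obtain ⟨xc, hxc, -⟩ := sd_exists hCnil'
    exact ⟨B, C, hBC, habc, ⟨xb, hxb⟩, ⟨xc, hxc⟩⟩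
  · rintro ⟨b, c, hbc, rfl, ⟨xb, hxb⟩, ⟨xc, hxc⟩⟩
    have hb : IsNilpotent (b - b ^ 2) := lemB hxb
    have hc : IsNilpotent (c - c ^ 2) := lemB hxc
    set S : Subring R := Subring.closure {b, c} with hS
    letI : CommRing S := Subring.closureCommRingOfComm (pair_comm hbc)
    set B : S := ⟨b, Subring.subset_closure (by simp)⟩ with hB
    set C : S := ⟨c, Subring.subset_closure (by simp)⟩ with hC
    have hbS : IsNilpotent (B - B ^ 2) := nil_up (by push_cast; exact hb)
    have hcS : IsNilpotent (C - C ^ 2) := nil_up (by push_cast; exact hc)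
    have key : (B - C) - (B - C) ^ 3 =
        (B - B ^ 2) * (1 + B) - (C - C ^ 2) * (1 + C)
          + 3 * (B * (C - C ^ 2) - (B - B ^ 2) * C) := by ring
    have hnilS : IsNilpotent ((B - C) - (B - C) ^ 3) := by
      rw [key]
      refine (Commute.all _ _).isNilpotent_add
        ((Commute.all _ _).isNilpotent_sub
          ((Commute.all _ _).isNilpotent_mul_right hbS)
          ((Commute.all _ _).isNilpotent_mul_right hcS))
        ((Commute.all _ _).isNilpotent_mul_left
          ((Commute.all _ _).isNilpotent_sub
            ((Commute.all _ _).isNilpotent_mul_left hcS)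
            ((Commute.all _ _).isNilpotent_mul_right hbS)))
    have hnil : IsNilpotent ((b - c) - (b - c) ^ 3) := by
      have := nil_down hnilS; push_cast at this; exact this
    exact lemD hnil
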